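/- Fix a site x of the hexagonal lattice ℍ, let A_x be the union of the vertex sets of the three hexagonal cells (6-cycles of ℍ) containing x, and let E_{A_x} be the set of edges of ℍ with both endpoints in A_x (so |E_{A_x}| = 15). For a configuration σ define the internal energy e(σ) = − Σ_{{y,z} ∈ E_{A_x}} σ_y σ_z (so −15 ≤ e(σ) ≤ 15). If σ′ is obtained from σ by a single legal flip of the majority dynamics at any site w, then e(σ′) ≤ e(σ); moreover, if w ∈ {x} ∪ N(x), then e(σ′) ≤ e(σ) − 2. -/

import Mathlib

open MeasureTheory ENNReal

/-- Sites of the hexagonal (honeycomb) lattice ℍ, coordinatized by ℤ × ℤ. -/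
abbrev Site : Type := ℤ × ℤ

/-- A spin configuration: `true` stands for spin +1, `false` for spin −1. -/
abbrev Config : Type := Site → Bool

/-- The three neighbors of a site: `(i,j)` is adjacent to `(i−1,j)`, `(i+1,j)`, and to
`(i,j+1)` if `i+j` is even, to `(i,j−1)` if `i+j` is odd. -/
def nbrs (x : Site) : List Site :=
  [(x.1 - 1, x.2), (x.1 + 1, x.2),
   if Even (x.1 + x.2) then (x.1, x.2 + 1) else (x.1, x.2 - 1)]

/-- Adjacency in the hexagonal lattice. -/
def Adj (x y : Site) : Prop := y ∈ nbrs x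

instance : DecidableRel Adj := fun x y => by unfold Adj; infer_instance

/-- Flipping the spin at site `x` is legal for the zero-temperature majority dynamics:
`σ x` disagrees with at least two of the three spins of the neighbors of `x`. -/
def LegalMaj (σ : Config) (x : Site) : Prop :=
  2 ≤ (nbrs x).countP (fun y => σ y != σ x)

/-- The configuration obtained from `σ` by flipping the spin at `x`. -/
def flipAt (σ : Config) (x : Site) : Config := Function.update σ x (!(σ x))

/-- `η 0, η 1, …` is a legal flip sequence of the majority dynamics, of length `m ∈ ℕ∞`
(`m = ⊤` for an infinite sequence): each configuration is obtained from the previous one by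
flipping the spin at a single site where the flip is legal. -/
def IsLegalFlipSeqMaj (η : ℕ → Config) (m : ℕ∞) : Prop :=
  ∀ n : ℕ, (n : ℕ∞) + 1 ≤ m → ∃ x, LegalMaj (η n) x ∧ η (n + 1) = flipAt (η n) x

/-- The spin value of a site as an integer: `true` ↦ +1, `false` ↦ −1. -/
def ival (b : Bool) : ℤ := if b then 1 else -1

/-- The offsets (relative to a site of even parity) of the 13 sites forming the union of
the vertex sets of the three hexagonal cells of ℍ containing that site. -/
def evenOffsets : List Site :=
  [(0, 0), (1, 0), (2, 0), (2, 1), (1, 1), (0, 1), (-2, 0), (-1, 0), (-1, 1), (-2, 1),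
   (1, -1), (0, -1), (-1, -1)]

/-- `hexA x` is the union of the vertex sets of the three hexagonal cells (6-cycles of ℍ)
containing `x`. -/
def hexA (x : Site) : Finset Site :=
  ((if Even (x.1 + x.2) then evenOffsets
    else evenOffsets.map (fun p => (p.1, -p.2))).map
      (fun p => (x.1 + p.1, x.2 + p.2))).toFinset

/-- `hexEdges x` is the set of edges of ℍ with both endpoints in `hexA x`, each edge
recorded once as an ordered pair with lexicographically smaller endpoint first. -/
def hexEdges (x : Site) : Finset (Site × Site) :=
  (hexA x ×ˢ hexA x).filter
    (fun p => Adj p.1 p.2 ∧ (p.1.1 < p.2.1 ∨ (p.1.1 = p.2.1 ∧ p.1.2 < p.2.2)))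

/-- The internal energy of `A_x`:  e(σ) = − Σ_{{y,z} ∈ E_{A_x}} σ_y σ_z. -/
def internalEnergy (x : Site) (σ : Config) : ℤ :=
  - ∑ p ∈ hexEdges x, ival (σ p.1) * ival (σ p.2)


/-! ### Auxiliary machinery -/

def tr (t : Site) (p : Site) : Site := (p.1 + t.1, p.2 + t.2)

@[simp] lemma tr_def (t p : Site) : tr t p = (p.1 + t.1, p.2 + t.2) := rfl

lemma tr_inj (t : Site) : Function.Injective (tr t) := by
  intro a b h
  simp only [tr, Prod.ext_iff] at h ⊢
  omega

lemma even_shift {t : Site} (a : Site) (ht : Even (t.1 + t.2)) :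
    Even (a.1 + t.1 + (a.2 + t.2)) ↔ Even (a.1 + a.2) := by
  rw [Int.even_iff] at ht ⊢
  rw [Int.even_iff]
  omega

lemma nbrs_tr (t a : Site) (ht : Even (t.1 + t.2)) :
    nbrs (tr t a) = (nbrs a).map (tr t) := by
  simp only [nbrs, tr, List.map_cons, List.map_nil, even_shift a ht,
    apply_ite (fun p : Site => ((p.1 + t.1, p.2 + t.2) : Site))]
  split_ifs <;> simp [Prod.ext_iff] <;> constructor <;> ring_nf <;> try trivial

lemma adj_tr (t a b : Site) (ht : Even (t.1 + t.2)) :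
    Adj (tr t a) (tr t b) ↔ Adj a b := by
  rw [Adj, Adj, nbrs_tr t a ht, List.mem_map]
  constructor
  · rintro ⟨c, hc, h⟩
    rwa [← tr_inj t h]
  · exact fun h => ⟨b, h, rfl⟩

lemma hexA_tr (t x : Site) (ht : Even (t.1 + t.2)) :
    hexA (tr t x) = (hexA x).image (tr t) := by
  ext p
  simp only [hexA, tr_def, even_shift x ht, Finset.mem_image, List.mem_toFinset, List.mem_map]
  constructor
  · rintro ⟨q, hq, rfl⟩
    exact ⟨(x.1 + q.1, x.2 + q.2), ⟨q, hq, rfl⟩, by simp [Prod.ext_iff]; omega⟩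
  · rintro ⟨q, ⟨r, hr, rfl⟩, rfl⟩
    exact ⟨r, hr, by simp [Prod.ext_iff]; omega⟩

lemma hexEdges_tr (t x : Site) (ht : Even (t.1 + t.2)) :
    hexEdges (tr t x) = (hexEdges x).image (Prod.map (tr t) (tr t)) := by
  ext p
  simp only [hexEdges, Finset.mem_filter, Finset.mem_product, Finset.mem_image,
    hexA_tr t x ht]
  constructor
  · rintro ⟨⟨hu, hv⟩, hadj, hlex⟩
    obtain ⟨a, ha, ha'⟩ := hu
    obtain ⟨b, hb, hb'⟩ := hv
    refine ⟨(a, b), ⟨⟨ha, hb⟩, ?_, ?_⟩, ?_⟩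
    · rw [← ha', ← hb'] at hadj
      exact (adj_tr t a b ht).1 hadj
    · rw [← ha', ← hb'] at hlex
      simp only [tr_def] at hlex ⊢
      omega
    · rw [Prod.ext_iff]
      exact ⟨ha', hb'⟩
  · rintro ⟨⟨a, b⟩, ⟨⟨ha, hb⟩, hadj, hlex⟩, rfl⟩
    refine ⟨⟨⟨a, ha, rfl⟩, ⟨b, hb, rfl⟩⟩, (adj_tr t a b ht).2 hadj, ?_⟩
    simp only [Prod.map_apply, tr_def] at hlex ⊢
    omega

def deg (x w : Site) : ℕ := ((hexEdges x).filter (fun p => p.1 = w ∨ p.2 = w)).card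

lemma deg_tr (t x w : Site) (ht : Even (t.1 + t.2)) :
    deg (tr t x) (tr t w) = deg x w := by
  rw [deg, deg, hexEdges_tr t x ht, Finset.filter_image]
  rw [Finset.card_image_of_injective _ (Prod.map_injective.mpr ⟨tr_inj t, tr_inj t⟩)]
  congr 1
  apply Finset.filter_congr
  intro p _
  constructor
  · rintro (h | h)
    · exact Or.inl (tr_inj t h)
    · exact Or.inr (tr_inj t h)
  · rintro (rfl | rfl)
    · exact Or.inl rfl
    · exact Or.inr rfl

def base (x : Site) : Site := if Even (x.1 + x.2) then (0, 0) else (1, 0)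

def tvec (x : Site) : Site := (x.1 - (base x).1, x.2 - (base x).2)

lemma tvec_even (x : Site) : Even ((tvec x).1 + (tvec x).2) := by
  unfold tvec base
  split_ifs with h <;> rw [Int.even_iff] at h ⊢ <;> simp only [] <;> omega

lemma tr_base (x : Site) : tr (tvec x) (base x) = x := by
  simp [tvec, Prod.ext_iff]

lemma base_cases (x : Site) : base x = (0, 0) ∨ base x = (1, 0) := by
  unfold base; split_ifs <;> simp

lemma card_base0 : (hexEdges ((0:ℤ), (0:ℤ))).card = 15 := by decide
lemma card_base1 : (hexEdges ((1:ℤ), (0:ℤ))).card = 15 := by decide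
lemma deg_base0 : ∀ w ∈ hexA ((0:ℤ), (0:ℤ)), deg (0,0) w = 2 ∨ deg (0,0) w = 3 := by decide
lemma deg_base1 : ∀ w ∈ hexA ((1:ℤ), (0:ℤ)), deg (1,0) w = 2 ∨ deg (1,0) w = 3 := by decide
lemma deg_near0 : deg ((0:ℤ),(0:ℤ)) (0,0) = 3 ∧ ∀ w ∈ nbrs ((0:ℤ),(0:ℤ)), deg (0,0) w = 3 := by decide
lemma deg_near1 : deg ((1:ℤ),(0:ℤ)) (1,0) = 3 ∧ ∀ w ∈ nbrs ((1:ℤ),(0:ℤ)), deg (1,0) w = 3 := by decide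

lemma hexEdges_card (x : Site) : (hexEdges x).card = 15 := by
  have h := hexEdges_tr (tvec x) (base x) (tvec_even x)
  rw [tr_base x] at h
  rw [h, Finset.card_image_of_injective _ (Prod.map_injective.mpr ⟨tr_inj _, tr_inj _⟩)]
  rcases base_cases x with hb | hb <;> rw [hb]
  · exact card_base0
  · exact card_base1

lemma deg_mem (x w : Site) (hw : w ∈ hexA x) : deg x w = 2 ∨ deg x w = 3 := by
  have hA := hexA_tr (tvec x) (base x) (tvec_even x)
  rw [tr_base x] at hA
  rw [hA, Finset.mem_image] at hw
  obtain ⟨w₀, hw₀, rfl⟩ := hw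
  have h := deg_tr (tvec x) (base x) w₀ (tvec_even x)
  rw [tr_base x] at h
  rw [h]
  rcases base_cases x with hb | hb <;> rw [hb] at hw₀ ⊢
  · exact deg_base0 w₀ hw₀
  · exact deg_base1 w₀ hw₀

lemma deg_near (x w : Site) (hw : w = x ∨ w ∈ nbrs x) : deg x w = 3 := by
  rcases hw with rfl | hw
  · have h := deg_tr (tvec w) (base w) (base w) (tvec_even w)
    rw [tr_base w] at h
    rw [h]
    rcases base_cases w with hb | hb <;> rw [hb]
    · exact deg_near0.1
    · exact deg_near1.1
  · have hN := nbrs_tr (tvec x) (base x) (tvec_even x)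
    rw [tr_base x] at hN
    rw [hN, List.mem_map] at hw
    obtain ⟨w₀, hw₀, rfl⟩ := hw
    have h := deg_tr (tvec x) (base x) w₀ (tvec_even x)
    rw [tr_base x] at h
    rw [h]
    rcases base_cases x with hb | hb <;> rw [hb] at hw₀ ⊢
    · exact deg_near0.2 w₀ hw₀
    · exact deg_near1.2 w₀ hw₀

/-! ### Edge facts -/

lemma edge_mem {x : Site} {p : Site × Site} (hp : p ∈ hexEdges x) :
    p.1 ∈ hexA x ∧ p.2 ∈ hexA x ∧ Adj p.1 p.2 ∧
      (p.1.1 < p.2.1 ∨ (p.1.1 = p.2.1 ∧ p.1.2 < p.2.2)) := by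
  simp only [hexEdges, Finset.mem_filter, Finset.mem_product] at hp
  tauto

lemma edge_ne {x : Site} {p : Site × Site} (hp : p ∈ hexEdges x) : p.1 ≠ p.2 := by
  have h := (edge_mem hp).2.2.2
  intro hq
  rw [hq] at h
  omega

lemma adj_symm {a b : Site} (h : Adj a b) : Adj b a := by
  obtain ⟨a1, a2⟩ := a
  obtain ⟨b1, b2⟩ := b
  simp only [Adj, nbrs, List.mem_cons, List.not_mem_nil, or_false, Prod.mk.injEq] at h ⊢
  split_ifs at h ⊢ <;> simp only [Prod.mk.injEq, Int.even_iff] at * <;> omega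

lemma nbrs_nodup (w : Site) : (nbrs w).Nodup := by
  obtain ⟨w1, w2⟩ := w
  simp only [nbrs]
  split_ifs <;> simp [Prod.ext_iff] <;> omega

lemma nbrs_toFinset_card (w : Site) : (nbrs w).toFinset.card = 3 := by
  rw [List.toFinset_card_of_nodup (nbrs_nodup w)]
  rfl

lemma D_card {σ : Config} {w : Site} (hl : LegalMaj σ w) :
    2 ≤ ((nbrs w).toFinset.filter (fun y => σ y ≠ σ w)).card := by
  have h1 : ((nbrs w).filter (fun y => σ y != σ w)).toFinset
      = (nbrs w).toFinset.filter (fun y => σ y ≠ σ w) := by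
    rw [List.toFinset_filter]
    apply Finset.filter_congr
    intro y _
    simp [bne_iff_ne]
  calc 2 ≤ (nbrs w).countP (fun y => σ y != σ w) := hl
    _ = ((nbrs w).filter (fun y => σ y != σ w)).length := List.countP_eq_length_filter
    _ = ((nbrs w).filter (fun y => σ y != σ w)).toFinset.card :=
        (List.toFinset_card_of_nodup ((nbrs_nodup w).filter _)).symm
    _ = _ := by rw [h1]

/-! ### Energy -/

lemma ival_mul_cases (b c : Bool) : ival b * ival c = 1 ∨ ival b * ival c = -1 := by
  cases b <;> cases c <;> simp [ival]

lemma energy_bounds (x : Site) (σ : Config) :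
    -15 ≤ internalEnergy x σ ∧ internalEnergy x σ ≤ 15 := by
  have hcard := hexEdges_card x
  have h1 : ∑ p ∈ hexEdges x, ival (σ p.1) * ival (σ p.2) ≤ 15 := by
    calc ∑ p ∈ hexEdges x, ival (σ p.1) * ival (σ p.2) ≤ ∑ _p ∈ hexEdges x, (1 : ℤ) := by
          apply Finset.sum_le_sum
          intro p _
          rcases ival_mul_cases (σ p.1) (σ p.2) with h | h <;> omega
      _ = 15 := by rw [Finset.sum_const, hcard]; ring
  have h2 : (-15 : ℤ) ≤ ∑ p ∈ hexEdges x, ival (σ p.1) * ival (σ p.2) := by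
    calc (-15 : ℤ) = ∑ _p ∈ hexEdges x, (-1 : ℤ) := by rw [Finset.sum_const, hcard]; ring
      _ ≤ ∑ p ∈ hexEdges x, ival (σ p.1) * ival (σ p.2) := by
          apply Finset.sum_le_sum
          intro p _
          rcases ival_mul_cases (σ p.1) (σ p.2) with h | h <;> omega
  unfold internalEnergy
  omega

lemma ival_not (b : Bool) : ival (!b) = - ival b := by cases b <;> simp [ival]

lemma energy_flip (x w : Site) (σ : Config) :
    internalEnergy x (flipAt σ w) = internalEnergy x σ +
      2 * ∑ p ∈ (hexEdges x).filter (fun p => p.1 = w ∨ p.2 = w),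
        ival (σ p.1) * ival (σ p.2) := by
  unfold internalEnergy
  rw [← Finset.sum_filter_add_sum_filter_not (hexEdges x) (fun p => p.1 = w ∨ p.2 = w)
      (fun p => ival (flipAt σ w p.1) * ival (flipAt σ w p.2)),
    ← Finset.sum_filter_add_sum_filter_not (hexEdges x) (fun p => p.1 = w ∨ p.2 = w)
      (fun p => ival (σ p.1) * ival (σ p.2))]
  have e1 : ∑ p ∈ (hexEdges x).filter (fun p => p.1 = w ∨ p.2 = w),
      ival (flipAt σ w p.1) * ival (flipAt σ w p.2)
      = - ∑ p ∈ (hexEdges x).filter (fun p => p.1 = w ∨ p.2 = w),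
          ival (σ p.1) * ival (σ p.2) := by
    rw [← Finset.sum_neg_distrib]
    apply Finset.sum_congr rfl
    intro p hp
    rw [Finset.mem_filter] at hp
    have hne : p.1 ≠ p.2 := edge_ne hp.1
    rcases hp.2 with h1 | h2
    · have h2' : p.2 ≠ w := fun hh => hne (h1.trans hh.symm)
      rw [h1, flipAt, Function.update_self, Function.update_of_ne h2', ival_not]
      ring
    · have h1' : p.1 ≠ w := fun hh => hne (hh.trans h2.symm)
      rw [h2, flipAt, Function.update_self, Function.update_of_ne h1', ival_not]
      ring
  have e2 : ∑ p ∈ (hexEdges x).filter (fun p => ¬(p.1 = w ∨ p.2 = w)),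
      ival (flipAt σ w p.1) * ival (flipAt σ w p.2)
      = ∑ p ∈ (hexEdges x).filter (fun p => ¬(p.1 = w ∨ p.2 = w)),
          ival (σ p.1) * ival (σ p.2) := by
    apply Finset.sum_congr rfl
    intro p hp
    rw [Finset.mem_filter] at hp
    push_neg at hp
    rw [flipAt, Function.update_of_ne hp.2.1, Function.update_of_ne hp.2.2]
  rw [e1, e2]
  ring

lemma flip_sum_le (x w : Site) (σ : Config) (hl : LegalMaj σ w) :
    ∑ p ∈ (hexEdges x).filter (fun p => p.1 = w ∨ p.2 = w), ival (σ p.1) * ival (σ p.2)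
      ≤ 2 - (deg x w : ℤ) := by
  set S := (hexEdges x).filter (fun p => p.1 = w ∨ p.2 = w) with hS
  set other : Site × Site → Site := fun p => if p.1 = w then p.2 else p.1 with hother
  have hop : ∀ r ∈ S, (r.1 = w ∧ other r = r.2) ∨ (r.1 ≠ w ∧ r.2 = w ∧ other r = r.1) := by
    intro r hr
    rw [hS, Finset.mem_filter] at hr
    by_cases h : r.1 = w
    · exact Or.inl ⟨h, if_pos h⟩
    · rcases hr.2 with h' | h'
      · exact absurd h' h
      · exact Or.inr ⟨h, h', if_neg h⟩
  have hedge : ∀ r ∈ S, r ∈ hexEdges x := fun r hr => (Finset.mem_filter.1 hr).1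
  have hinj : ∀ p ∈ S, ∀ q ∈ S, other p = other q → p = q := by
    intro p hp q hq hpq
    have hlp := (edge_mem (hedge p hp)).2.2.2
    have hlq := (edge_mem (hedge q hq)).2.2.2
    rcases hop p hp with ⟨hp1, hp2⟩ | ⟨hp1, hp1', hp2⟩ <;>
      rcases hop q hq with ⟨hq1, hq2⟩ | ⟨hq1, hq1', hq2⟩
    · rw [hp2, hq2] at hpq
      exact Prod.ext_iff.mpr ⟨hp1.trans hq1.symm, hpq⟩
    · exfalso
      rw [hp2, hq2] at hpq
      obtain ⟨e1, e2⟩ := Prod.ext_iff.mp hpq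
      obtain ⟨e3, e4⟩ := Prod.ext_iff.mp hp1
      obtain ⟨e5, e6⟩ := Prod.ext_iff.mp hq1'
      omega
    · exfalso
      rw [hp2, hq2] at hpq
      obtain ⟨e1, e2⟩ := Prod.ext_iff.mp hpq
      obtain ⟨e3, e4⟩ := Prod.ext_iff.mp hp1'
      obtain ⟨e5, e6⟩ := Prod.ext_iff.mp hq1
      omega
    · rw [hp2, hq2] at hpq
      exact Prod.ext_iff.mpr ⟨hpq, hp1'.trans hq1'.symm⟩
  have hmap : ∀ p ∈ S, other p ∈ (nbrs w).toFinset ∧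
      ival (σ p.1) * ival (σ p.2) = ival (σ w) * ival (σ (other p)) := by
    intro p hp
    have hadj := (edge_mem (hedge p hp)).2.2.1
    rcases hop p hp with ⟨hp1, hp2⟩ | ⟨_, hp1', hp2⟩
    · refine ⟨?_, ?_⟩
      · rw [hp2]
        rw [hp1] at hadj
        exact List.mem_toFinset.2 hadj
      · rw [hp2, hp1]
    · refine ⟨?_, ?_⟩
      · rw [hp2]
        rw [hp1'] at hadj
        exact List.mem_toFinset.2 (adj_symm hadj)
      · rw [hp2, hp1']
        ring
  set T := S.image other with hT
  have hTsub : T ⊆ (nbrs w).toFinset := by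
    intro y hy
    rw [hT, Finset.mem_image] at hy
    obtain ⟨p, hp, rfl⟩ := hy
    exact (hmap p hp).1
  have hTcard : T.card = S.card := Finset.card_image_of_injOn hinj
  have hsum : ∑ p ∈ S, ival (σ p.1) * ival (σ p.2) = ∑ y ∈ T, ival (σ w) * ival (σ y) := by
    rw [hT, Finset.sum_image hinj]
    exact Finset.sum_congr rfl (fun p hp => (hmap p hp).2)
  set D := (nbrs w).toFinset.filter (fun y => σ y ≠ σ w) with hD
  have hDcard : 2 ≤ D.card := D_card hl
  have hval : ∀ b c : Bool, ival c * ival b = 1 - 2 * (if b ≠ c then (1 : ℤ) else 0) := by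
    decide
  have hsum2 : ∑ y ∈ T, ival (σ w) * ival (σ y)
      = (T.card : ℤ) - 2 * ((T.filter (fun y => σ y ≠ σ w)).card : ℤ) := by
    calc ∑ y ∈ T, ival (σ w) * ival (σ y)
        = ∑ y ∈ T, (1 - 2 * (if σ y ≠ σ w then (1 : ℤ) else 0)) :=
          Finset.sum_congr rfl (fun y _ => hval (σ y) (σ w))
      _ = _ := by
          rw [Finset.sum_sub_distrib, Finset.sum_const, ← Finset.mul_sum, Finset.sum_boole]
          simp
  have hfil : T.card + 2 ≤ (T.filter (fun y => σ y ≠ σ w)).card + 3 := by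
    have h1 := Finset.card_inter_add_card_union T D
    have h2 : (T ∪ D).card ≤ 3 := by
      rw [← nbrs_toFinset_card w]
      exact Finset.card_le_card (Finset.union_subset hTsub (Finset.filter_subset _ _))
    have h3 : T ∩ D = T.filter (fun y => σ y ≠ σ w) := by
      ext y
      simp only [Finset.mem_inter, hD, Finset.mem_filter]
      constructor
      · rintro ⟨hy, _, hy2⟩
        exact ⟨hy, hy2⟩
      · rintro ⟨hy, hy2⟩
        exact ⟨hy, hTsub hy, hy2⟩
    rw [h3] at h1
    omega
  have hdeg : deg x w = S.card := rfl
  rw [hsum, hsum2, hdeg, ← hTcard]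
  have : (T.card : ℤ) + 2 ≤ ((T.filter (fun y => σ y ≠ σ w)).card : ℤ) + 3 := by
    exact_mod_cast hfil
  omega

lemma flip_sum_zero (x w : Site) (σ : Config) (h : deg x w = 0) :
    ∑ p ∈ (hexEdges x).filter (fun p => p.1 = w ∨ p.2 = w), ival (σ p.1) * ival (σ p.2) = 0 := by
  rw [Finset.card_eq_zero.1 h, Finset.sum_empty]

/-- `E_{A_x}` has exactly 15 edges, `−15 ≤ e(σ) ≤ 15`, a single legal flip of
the majority dynamics at any site `w` never increases the internal energy of `A_x`, and if
`w ∈ {x} ∪ N(x)` it decreases it by at least 2. -/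
theorem stmt6 (x : Site) (σ : Config) :
    (hexEdges x).card = 15 ∧
    (-15 ≤ internalEnergy x σ ∧ internalEnergy x σ ≤ 15) ∧
    ∀ w : Site, LegalMaj σ w →
      internalEnergy x (flipAt σ w) ≤ internalEnergy x σ ∧
      ((w = x ∨ w ∈ nbrs x) →
        internalEnergy x (flipAt σ w) ≤ internalEnergy x σ - 2) := by
  refine ⟨hexEdges_card x, energy_bounds x σ, ?_⟩
  intro w hl
  have hf := energy_flip x w σ
  have hle := flip_sum_le x w σ hl
  constructor
  · rcases Decidable.em (w ∈ hexA x) with hw | hw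
    · rcases deg_mem x w hw with h | h <;> rw [hf] <;> rw [h] at hle <;>
        push_cast at hle <;> omega
    · have h0 : deg x w = 0 := by
        rw [deg, Finset.card_eq_zero, Finset.filter_eq_empty_iff]
        intro p hp
        rintro (h | h)
        · exact hw (h ▸ (edge_mem hp).1)
        · exact hw (h ▸ (edge_mem hp).2.1)
      rw [hf, flip_sum_zero x w σ h0]
      omega
  · intro hw
    have h3 := deg_near x w hw
    rw [h3] at hle
    push_cast at hle
    rw [hf]
    omega
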